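/- Let D be a positive integer, μ ∈ ℝ^D, σ ∈ ℝ^D with σ_d > 0, and let s be a random vector in ℝ^D with independent coordinates s_d ~ N(μ_d, σ_d²). For τ ∈ ℝ^D define k(τ) = exp(−2π² Σ_{d=1}^{D} σ_d² τ_d²) cos(2π ⟨μ, τ⟩). Then Var[cos(2π ⟨s, τ⟩)] = (1 + k(2τ))/2 − k(τ)². -/

import Mathlib

open MeasureTheory ProbabilityTheory Real

/-- One SM kernel component `k(τ) = exp(−2π² Σ_d σ_d² τ_d²) cos(2π ⟨μ, τ⟩)`. -/
noncomputable def kGauss {D : ℕ} (μ σ : Fin D → ℝ) (τ : Fin D → ℝ) : ℝ :=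
  Real.exp (-2 * π ^ 2 * ∑ d, σ d ^ 2 * τ d ^ 2) * Real.cos (2 * π * ∑ d, μ d * τ d)

section Aux
open Complex
open scoped NNReal ENNReal

lemma charGauss (m : ℝ) (v : ℝ≥0) (hv : v ≠ 0) (t : ℝ) :
    ∫ x : ℝ, Complex.exp ((t * x : ℝ) * Complex.I) ∂(gaussianReal m v) =
      Complex.exp ((t * m : ℝ) * Complex.I - (v : ℝ) * t ^ 2 / 2) := by
  have hv0 : (0:ℝ) < v := lt_of_le_of_ne v.coe_nonneg (by exact_mod_cast (Ne.symm hv))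
  have hvC : ((v:ℝ):ℂ) ≠ 0 := by exact_mod_cast hv0.ne'
  have hs0 : (0:ℝ) < Real.sqrt (2 * π * v) := Real.sqrt_pos.2 (by positivity)
  rw [gaussianReal_of_var_ne_zero m hv]
  have hmeas : Measurable fun x => (gaussianPDFReal m v x).toNNReal :=
    (measurable_gaussianPDFReal m v).real_toNNReal
  have hpdf : (gaussianPDF m v) = fun x => ((gaussianPDFReal m v x).toNNReal : ℝ≥0∞) := by
    ext x; simp [gaussianPDF, ENNReal.ofReal]
  rw [hpdf, integral_withDensity_eq_integral_smul hmeas]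
  have key : ∀ x : ℝ, (gaussianPDFReal m v x).toNNReal • Complex.exp ((t*x:ℝ) * Complex.I)
      = ((Real.sqrt (2*π*v))⁻¹ : ℂ) *
        Complex.exp ((-(1/(2*(v:ℝ))) : ℂ) * x^2 + ((m/(v:ℝ)) + t * Complex.I) * x
          + (-((m:ℂ)^2)/(2*(v:ℝ)))) := by
    intro x
    rw [NNReal.smul_def, Real.coe_toNNReal _ (gaussianPDFReal_nonneg m v x),
      Complex.real_smul, gaussianPDFReal]
    push_cast
    rw [mul_assoc, ← Complex.exp_add]
    congr 2
    field_simp [hvC]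
    ring
  simp_rw [key, integral_const_mul]
  rw [integral_cexp_quadratic (by simp [neg_re]; positivity : (-(1/(2*(v:ℝ))) : ℂ).re < 0)]
  have h1 : ((π:ℂ) / -(-(1/(2*(v:ℝ))))) = ((2*π*(v:ℝ) : ℝ) : ℂ) := by
    push_cast; field_simp
  have h2 : (((2*π*(v:ℝ) : ℝ) : ℂ)) ^ (1/2 : ℂ) = (Real.sqrt (2*π*(v:ℝ)) : ℂ) := by
    rw [show (1/2 : ℂ) = ((1/2 : ℝ) : ℂ) by norm_num, ← Complex.ofReal_cpow (by positivity),
      Real.sqrt_eq_rpow]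
  rw [h1, h2, ← mul_assoc, inv_mul_cancel₀ (by exact_mod_cast hs0.ne' : (Real.sqrt (2*π*(v:ℝ)) : ℂ) ≠ 0), one_mul]
  congr 1
  field_simp [hvC]
  ring_nf
  simp only [Complex.I_sq]
  push_cast
  ring

lemma expGauss (D : ℕ) (μ σ : Fin D → ℝ) (hσ : ∀ d, 0 < σ d) (τ : Fin D → ℝ) (c : ℝ) :
    ∫ s : Fin D → ℝ, Real.cos (c * ∑ d, s d * τ d)
        ∂(Measure.pi fun d => gaussianReal (μ d) ⟨σ d ^ 2, sq_nonneg _⟩) =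
      Real.exp (-(c^2/2) * ∑ d, σ d ^ 2 * τ d ^ 2) * Real.cos (c * ∑ d, μ d * τ d) := by
  set v : Fin D → ℝ≥0 := fun d => ⟨σ d ^ 2, sq_nonneg _⟩ with hvdef
  have hv : ∀ d, v d ≠ 0 := fun d => by
    simp only [hvdef, ← NNReal.coe_ne_zero]
    exact fun h => (pow_pos (hσ d) 2).ne' (congrArg Subtype.val h)
  set P := Measure.pi fun d => gaussianReal (μ d) (v d) with hP
  haveI : IsProbabilityMeasure P := by infer_instance
  have hθ : Continuous fun s : Fin D → ℝ => c * ∑ d, s d * τ d :=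
    continuous_const.mul (continuous_finset_sum _ fun d _ => (continuous_apply d).mul continuous_const)
  have hint : Integrable (fun s : Fin D → ℝ =>
      Complex.exp ((c * ∑ d, s d * τ d : ℝ) * Complex.I)) P := by
    refine (integrable_const (1:ℝ)).mono' ?_ ?_
    · exact (Complex.continuous_exp.comp ((Complex.continuous_ofReal.comp hθ).mul
        continuous_const)).aestronglyMeasurable
    · refine Filter.Eventually.of_forall fun s => ?_
      simp [Complex.norm_exp]
  have hre : ∫ s, Real.cos (c * ∑ d, s d * τ d) ∂P
      = (∫ s, Complex.exp ((c * ∑ d, s d * τ d : ℝ) * Complex.I) ∂P).re := by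
    have h' := integral_re hint
    simp only [RCLike.re_to_complex] at h'
    rw [← h']
    congr 1 with s
    rw [Complex.exp_ofReal_mul_I_re]
  rw [hre]
  have hsplit : ∀ s : Fin D → ℝ, Complex.exp ((c * ∑ d, s d * τ d : ℝ) * Complex.I)
      = ∏ d, Complex.exp (((c * τ d) * s d : ℝ) * Complex.I) := by
    intro s
    rw [← Complex.exp_sum]
    congr 1
    push_cast
    rw [Finset.mul_sum, Finset.sum_mul]
    exact Finset.sum_congr rfl fun d _ => by ring
  simp_rw [hsplit]
  have fub : ∫ s : Fin D → ℝ, ∏ d, Complex.exp (((c * τ d) * s d : ℝ) * Complex.I) ∂P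
      = ∏ d, ∫ x : ℝ, Complex.exp (((c * τ d) * x : ℝ) * Complex.I) ∂(gaussianReal (μ d) (v d)) := by
    exact @MeasureTheory.integral_fintype_prod_eq_prod ℂ (Fin D) _ _ (fun _ => ℝ)
      (fun d x => Complex.exp (((c * τ d) * x : ℝ) * Complex.I))
      (fun _ => inferInstance) (fun d => gaussianReal (μ d) (v d))
      (fun d => by change SigmaFinite (gaussianReal (μ d) (v d)); infer_instance)
  rw [fub]
  have : ∀ d, ∫ x : ℝ, Complex.exp (((c * τ d) * x : ℝ) * Complex.I) ∂(gaussianReal (μ d) (v d))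
      = Complex.exp (((c * τ d) * μ d : ℝ) * Complex.I - (v d : ℝ) * ((c * τ d : ℝ) : ℂ) ^ 2 / 2) :=
    fun d => charGauss (μ d) (v d) (hv d) (c * τ d)
  simp_rw [this, ← Complex.exp_sum]
  have hterm : ∀ d : Fin D, (((c * τ d) * μ d : ℝ) * Complex.I - (v d : ℝ) * ((c * τ d : ℝ) : ℂ) ^ 2 / 2)
      = ((-(σ d ^ 2 * τ d ^ 2 * (c ^ 2 / 2)) : ℝ) : ℂ) + ((c * τ d * μ d : ℝ) : ℂ) * Complex.I := by
    intro d
    have hvc : ((v d : ℝ) : ℂ) = ((σ d ^ 2 : ℝ) : ℂ) := rfl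
    rw [hvc]
    push_cast
    ring
  have hz : (∑ d, (((c * τ d) * μ d : ℝ) * Complex.I - (v d : ℝ) * ((c * τ d : ℝ) : ℂ) ^ 2 / 2))
      = ((-(c^2/2) * ∑ d, σ d ^ 2 * τ d ^ 2 : ℝ) : ℂ) + ((c * ∑ d, μ d * τ d : ℝ) : ℂ) * Complex.I := by
    simp_rw [hterm]
    rw [Finset.sum_add_distrib, ← Complex.ofReal_sum, ← Finset.sum_mul, ← Complex.ofReal_sum]
    have e1 : (∑ d, -(σ d ^ 2 * τ d ^ 2 * (c ^ 2 / 2))) = -(c^2/2) * ∑ d, σ d ^ 2 * τ d ^ 2 := by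
      rw [Finset.mul_sum]
      exact Finset.sum_congr rfl fun d _ => by ring
    have e2 : (∑ d, c * τ d * μ d) = c * ∑ d, μ d * τ d := by
      rw [Finset.mul_sum]
      exact Finset.sum_congr rfl fun d _ => by ring
    rw [e1, e2]
  rw [hz, Complex.exp_re]
  simp only [Complex.add_re, Complex.add_im, Complex.ofReal_re, Complex.ofReal_im,
    Complex.mul_re, Complex.mul_im, Complex.I_re, Complex.I_im]
  norm_num

end Aux

/-- For a random vector `s` in `ℝ^D` with independent coordinates `s d ~ N(μ d, (σ d)^2)`,
`Var[cos(2π ⟨s, τ⟩)] = (1 + k(2τ))/2 − k(τ)²`. -/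
theorem variance_cos_gaussian (D : ℕ) (hD : 0 < D) (μ σ : Fin D → ℝ)
    (hσ : ∀ d, 0 < σ d) (τ : Fin D → ℝ) :
    ProbabilityTheory.variance
        (fun s : Fin D → ℝ => Real.cos (2 * π * ∑ d, s d * τ d))
        (Measure.pi fun d => gaussianReal (μ d) ⟨σ d ^ 2, sq_nonneg _⟩) =
      (1 + kGauss μ σ (2 • τ)) / 2 - kGauss μ σ τ ^ 2 := by
  set P := Measure.pi fun d => gaussianReal (μ d) ⟨σ d ^ 2, sq_nonneg _⟩ with hP
  haveI : IsProbabilityMeasure P := by rw [hP]; exact @Measure.pi.instIsProbabilityMeasure _ _ _ _ _ (fun d => instIsProbabilityMeasureGaussianReal _ _)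
  set X : (Fin D → ℝ) → ℝ := fun s => Real.cos (2 * π * ∑ d, s d * τ d) with hX
  have hcont : ∀ c : ℝ, Continuous fun s : Fin D → ℝ => Real.cos (c * ∑ d, s d * τ d) :=
    fun c => Real.continuous_cos.comp (continuous_const.mul
      (continuous_finset_sum _ fun d _ => (continuous_apply d).mul continuous_const))
  have hbd : ∀ (c : ℝ) (s : Fin D → ℝ), ‖Real.cos (c * ∑ d, s d * τ d)‖ ≤ 1 := by
    intro c s; rw [Real.norm_eq_abs]; exact Real.abs_cos_le_one _
  have hXmem : MemLp X 2 P :=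
    (memLp_top_of_bound (hcont (2*π)).aestronglyMeasurable 1
      (Filter.Eventually.of_forall (hbd (2*π)))).mono_exponent le_top
  rw [variance_eq_sub hXmem]
  have hEX : ∫ s, X s ∂P = kGauss μ σ τ := by
    rw [hX, hP, expGauss D μ σ hσ τ (2*π), kGauss]
    congr 2
    ring
  have hgint : Integrable (fun s : Fin D → ℝ => Real.cos ((4*π) * ∑ d, s d * τ d)) P :=
    (integrable_const (1:ℝ)).mono' (hcont (4*π)).aestronglyMeasurable
      (Filter.Eventually.of_forall (hbd (4*π)))
  have hEX2 : ∫ s, (X s) ^ 2 ∂P = (1 + kGauss μ σ (2 • τ)) / 2 := by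
    have hsq : ∀ s : Fin D → ℝ, (X s) ^ 2
        = 1/2 + Real.cos ((4*π) * ∑ d, s d * τ d) / 2 := by
      intro s
      rw [hX, Real.cos_sq]
      congr 2
      ring
    simp_rw [hsq]
    rw [integral_add (integrable_const _) (hgint.div_const 2), integral_const,
      integral_div, probReal_univ]
    have h4 : ∫ s : Fin D → ℝ, Real.cos ((4*π) * ∑ d, s d * τ d) ∂P = kGauss μ σ (2 • τ) := by
      rw [hP, expGauss D μ σ hσ τ (4*π), kGauss]
      have e1 : ∑ d, σ d ^ 2 * (2 • τ) d ^ 2 = 4 * ∑ d, σ d ^ 2 * τ d ^ 2 := by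
        rw [Finset.mul_sum]
        exact Finset.sum_congr rfl fun d _ => by
          simp [Pi.smul_apply, smul_eq_mul]; ring
      have e2 : ∑ d, μ d * (2 • τ) d = 2 * ∑ d, μ d * τ d := by
        rw [Finset.mul_sum]
        exact Finset.sum_congr rfl fun d _ => by
          simp [Pi.smul_apply, smul_eq_mul]; ring
      rw [e1, e2]
      congr 2 <;> ring
    rw [h4]
    simp
    ring_nf
  have hpow : P[X ^ 2] = ∫ s, (X s)^2 ∂P :=
    integral_congr_ae (by filter_upwards with s; simp [Pi.pow_apply])
  rw [hpow, hEX2]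
  have : P[X] = kGauss μ σ τ := hEX
  rw [this]
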